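/- Let (A,d) be a differential graded algebra such that ker(d), with its induced grading, is a graded-prime ring (for any two nonzero graded two-sided ideals I, J of ker(d) one has IJ ≠ 0). Then (A,d) is dg-prime: for any two nonzero two-sided dg-ideals I, J of (A,d), IJ ≠ 0. -/

import Mathlib

/-- A differential making a `ℤ`-graded ring into a differential graded ring:
an additive endomorphism of degree `1`, of square zero, satisfying the
(signed) Leibniz rule on homogeneous elements. -/
structure DGDifferential {R : Type*} [Ring R] (𝒜 : ℤ → AddSubgroup R) [GradedRing 𝒜] where
  d : R →+ R
  d_mem : ∀ (i : ℤ) (x : R), x ∈ 𝒜 i → d x ∈ 𝒜 (i + 1)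
  d_sq : ∀ x : R, d (d x) = 0
  leibniz : ∀ (i : ℤ) (a b : R), a ∈ 𝒜 i →
    d (a * b) = d a * b + ((-1 : ℤ) ^ i.natAbs) • (a * d b)

variable {R : Type*} [Ring R] (𝒜 : ℤ → AddSubgroup R) [GradedRing 𝒜]

/-- A two-sided dg-ideal: a two-sided ideal that is graded (closed under taking
homogeneous components) and closed under the differential. -/
def IsDGIdeal (D : DGDifferential 𝒜) (I : TwoSidedIdeal R) : Prop :=
  (∀ x ∈ I, ∀ i : ℤ, (DirectSum.decompose 𝒜 x i : R) ∈ I) ∧ (∀ x ∈ I, D.d x ∈ I)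

/-- A two-sided ideal `I` is nilpotent if `I ^ n = 0` for some `n ≥ 1`, i.e. every
product of `n` elements of `I` vanishes. -/
def IsNilpotentIdeal (I : TwoSidedIdeal R) : Prop :=
  ∃ n : ℕ, 0 < n ∧ ∀ l : List R, l.length = n → (∀ x ∈ l, x ∈ I) → l.prod = 0

variable {𝒜} in
/-- A graded two-sided ideal of the subring of cycles `ker d`: a subset of `ker d`
which is an additive subgroup, closed under left and right multiplication by cycles,
and closed under taking homogeneous components. -/
def IsGradedIdealOfCycles (D : DGDifferential 𝒜) (I : Set R) : Prop :=
  (∀ x ∈ I, D.d x = 0) ∧ (0 : R) ∈ I ∧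
  (∀ a ∈ I, ∀ b ∈ I, a + b ∈ I) ∧ (∀ a ∈ I, -a ∈ I) ∧
  (∀ s : R, D.d s = 0 → ∀ a ∈ I, s * a ∈ I ∧ a * s ∈ I) ∧
  (∀ a ∈ I, ∀ i : ℤ, (DirectSum.decompose 𝒜 a i : R) ∈ I)

variable {𝒜} in
lemma DGDifferential.d_mul_cycles (D : DGDifferential 𝒜) {s b : R}
    (hs : D.d s = 0) (hb : D.d b = 0) : D.d (s * b) = 0 := by
  classical
  conv_lhs => rw [← DirectSum.sum_support_decompose 𝒜 s]
  rw [Finset.sum_mul, map_sum]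
  have : ∀ i ∈ (DirectSum.decompose 𝒜 s).support,
      D.d ((DirectSum.decompose 𝒜 s i : R) * b)
        = D.d (DirectSum.decompose 𝒜 s i : R) * b := by
    intro i _
    rw [D.leibniz i _ b (DirectSum.decompose 𝒜 s i).2, hb, mul_zero, smul_zero, add_zero]
  rw [Finset.sum_congr rfl this, ← Finset.sum_mul, ← map_sum,
    DirectSum.sum_support_decompose 𝒜 s, hs, zero_mul]

variable {𝒜} in
lemma DGDifferential.d_decompose (D : DGDifferential 𝒜) (x : R) (i : ℤ) :
    D.d (DirectSum.decompose 𝒜 x i : R) = (DirectSum.decompose 𝒜 (D.d x) (i + 1) : R) := by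
  classical
  induction x using DirectSum.Decomposition.inductionOn 𝒜 with
  | zero => simp
  | @homogeneous j m =>
    by_cases h : j = i
    · subst h
      rw [DirectSum.decompose_of_mem_same 𝒜 m.2,
        DirectSum.decompose_of_mem_same 𝒜 (D.d_mem j m.1 m.2)]
    · rw [DirectSum.decompose_of_mem_ne 𝒜 m.2 h, map_zero,
        DirectSum.decompose_of_mem_ne 𝒜 (D.d_mem j m.1 m.2) (by omega)]
  | add m m' hm hm' =>
    rw [DirectSum.decompose_add, DirectSum.add_apply, AddSubgroup.coe_add, D.d.map_add,
      hm, hm', D.d.map_add, DirectSum.decompose_add, DirectSum.add_apply, AddSubgroup.coe_add]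

variable {𝒜} in
/-- The cycles of a dg-ideal form a graded ideal of cycles. -/
lemma isGradedIdealOfCycles_inter (D : DGDifferential 𝒜) (I : TwoSidedIdeal R)
    (hI : IsDGIdeal 𝒜 D I) :
    IsGradedIdealOfCycles D {x : R | x ∈ I ∧ D.d x = 0} := by
  refine ⟨fun x hx => hx.2, ⟨I.zero_mem, map_zero _⟩,
    fun a ha b hb => ⟨I.add_mem ha.1 hb.1, by rw [map_add, ha.2, hb.2, add_zero]⟩,
    fun a ha => ⟨I.neg_mem ha.1, by rw [map_neg, ha.2, neg_zero]⟩,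
    fun s hs a ha => ⟨⟨I.mul_mem_left _ _ ha.1, D.d_mul_cycles hs ha.2⟩,
      ⟨I.mul_mem_right _ _ ha.1, D.d_mul_cycles ha.2 hs⟩⟩,
    fun a ha i => ⟨hI.1 a ha.1 i, by rw [D.d_decompose, ha.2]; simp⟩⟩

variable {𝒜} in
lemma cycles_ne_zero (D : DGDifferential 𝒜) (I : TwoSidedIdeal R)
    (hI : IsDGIdeal 𝒜 D I) (hne : I ≠ ⊥) :
    {x : R | x ∈ I ∧ D.d x = 0} ≠ {0} := by
  have : ∃ x ∈ I, x ≠ 0 := by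
    by_contra h
    push_neg at h
    apply hne
    ext x
    rw [TwoSidedIdeal.mem_bot]
    exact ⟨fun hx => h x hx, fun hx => hx ▸ I.zero_mem⟩
  obtain ⟨x, hxI, hx0⟩ := this
  by_cases hdx : D.d x = 0
  · intro h
    have : x ∈ ({0} : Set R) := h ▸ ⟨hxI, hdx⟩
    exact hx0 this
  · intro h
    have : D.d x ∈ ({0} : Set R) := h ▸ ⟨hI.2 x hxI, D.d_sq x⟩
    exact hdx this

/-- if the ring of cycles `ker d` is graded-prime, then `(A,d)` is
dg-prime: any two nonzero two-sided dg-ideals have nonzero product. -/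
theorem dgPrime_of_cycles_grPrime (D : DGDifferential 𝒜)
    (hgrprime : ∀ I J : Set R, IsGradedIdealOfCycles D I → IsGradedIdealOfCycles D J →
      I ≠ {0} → J ≠ {0} → ∃ a ∈ I, ∃ b ∈ J, a * b ≠ 0) :
    ∀ I J : TwoSidedIdeal R, IsDGIdeal 𝒜 D I → IsDGIdeal 𝒜 D J → I ≠ ⊥ → J ≠ ⊥ →
      ∃ a ∈ I, ∃ b ∈ J, a * b ≠ 0 := by
  intro I J hI hJ hIne hJne
  obtain ⟨a, ha, b, hb, hab⟩ := hgrprime _ _ (isGradedIdealOfCycles_inter D I hI)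
    (isGradedIdealOfCycles_inter D J hJ) (cycles_ne_zero D I hI hIne)
    (cycles_ne_zero D J hJ hJne)
  exact ⟨a, ha.1, b, hb.1, hab⟩
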